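/- Suppose f : [a,b] → ℝ is differentiable on (a,b), f' is increasing, and f'(x) ≥ λ > 0 on [a,b]. Write I = ∫_a^b e^{i f(x)} dx = |I| e^{iθ}. Then |I| ≤ (1 + sin(θ - f(a)))/λ; in particular |∫_a^b e^{i f(x)} dx| ≤ 2/λ. -/

import Mathlib

open Finset in
lemma vdc_abel (w S : ℕ → ℝ) : ∀ n : ℕ, 0 < n →
    (∀ i, i < n → 0 ≤ w i) → (∀ i j, i ≤ j → j < n → w j ≤ w i) →
    (∀ i, i ≤ n → S i ≤ 1) →
    ∑ i ∈ Finset.range n, w i * (S (i+1) - S i) ≤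
      w 0 * (1 - S 0) - w (n-1) * (1 - S n) := by
  intro n
  induction n with
  | zero => intro h; exact absurd h (by simp)
  | succ n ih =>
    intro _ hpos hw hS
    rcases Nat.eq_zero_or_pos n with rfl | hn
    · simp [Finset.sum_range_one]; ring_nf; exact le_refl _
    · have IH := ih hn (fun i hi => hpos i (by omega))
        (fun i j hij hj => hw i j hij (by omega)) (fun i hi => hS i (by omega))
      rw [Finset.sum_range_succ]
      have h1 : w n ≤ w (n-1) := hw (n-1) n (by omega) (by omega)
      have h2 : S n ≤ 1 := hS n (by omega)
      have h3 : (n + 1) - 1 = n := by omega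
      rw [h3]
      nlinarith [mul_nonneg (sub_nonneg.2 h1) (sub_nonneg.2 h2)]
open Set MeasureTheory intervalIntegral in
lemma vdc_key (a b lam θ : ℝ) (hab : a ≤ b) (f : ℝ → ℝ)
    (hg : ∀ x ∈ Set.Icc a b, HasDerivAt f (deriv f x) x)
    (hmono : MonotoneOn (deriv f) (Set.Icc a b))
    (hlam : 0 < lam) (hlow : ∀ x ∈ Set.Icc a b, lam ≤ deriv f x) :
    ∫ x in a..b, Real.cos (f x - θ) ≤ (1 - Real.sin (f a - θ)) / lam := by
  set D := deriv f with hD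
  have hcont : ContinuousOn f (Set.Icc a b) :=
    fun x hx => (hg x hx).continuousAt.continuousWithinAt
  have hmeas : Measurable D := measurable_deriv f
  have hub : ∀ x ∈ Set.Icc a b, D x ≤ D b :=
    fun x hx => hmono hx (Set.right_mem_Icc.2 hab) hx.2
  -- integrability of cos (f · - θ) on subintervals of [a,b]
  have hcos_cont : ContinuousOn (fun t => Real.cos (f t - θ)) (Set.Icc a b) :=
    (Real.continuous_cos.comp_continuousOn (hcont.sub continuousOn_const))
  have hint1 : ∀ u v, u ∈ Set.Icc a b → v ∈ Set.Icc a b →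
      IntervalIntegrable (fun t => Real.cos (f t - θ)) volume u v := by
    intro u v hu hv
    exact (hcos_cont.mono (Set.uIcc_subset_Icc hu hv)).intervalIntegrable
  -- integrability of D · cos (f · - θ)
  have hint2 : ∀ u v, u ∈ Set.Icc a b → v ∈ Set.Icc a b →
      IntervalIntegrable (fun t => D t * Real.cos (f t - θ)) volume u v := by
    intro u v hu hv
    rw [intervalIntegrable_iff]
    have hsub : Set.uIoc u v ⊆ Set.Icc a b :=
      (Set.uIoc_subset_uIcc).trans (Set.uIcc_subset_Icc hu hv)
    have hmeas2 : AEStronglyMeasurable (fun t => D t * Real.cos (f t - θ))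
        (volume.restrict (Set.uIoc u v)) := by
      apply AEStronglyMeasurable.mul
      · exact (hmeas.aestronglyMeasurable).restrict
      · exact ((hcos_cont.mono hsub).aemeasurable measurableSet_uIoc).aestronglyMeasurable
    haveI : IsFiniteMeasure (volume.restrict (Set.uIoc u v)) :=
      ⟨by rw [Measure.restrict_apply_univ, Set.uIoc]; simp [Real.volume_Ioc]⟩
    apply Integrable.mono' (integrable_const (|D b|)) hmeas2
    · filter_upwards [ae_restrict_mem measurableSet_uIoc] with t ht
      have ht' := hsub ht
      have h1 : lam ≤ D t := hlow t ht'
      have h2 : D t ≤ D b := hub t ht'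
      have := Real.abs_cos_le_one (f t - θ)
      rw [Real.norm_eq_abs, abs_mul]
      calc |D t| * |Real.cos (f t - θ)| ≤ |D t| * 1 := by
            exact mul_le_mul_of_nonneg_left (Real.abs_cos_le_one _) (abs_nonneg _)
        _ = |D t| := mul_one _
        _ ≤ |D b| := by rw [abs_of_pos (by linarith), abs_of_pos (by linarith [hlow b (Set.right_mem_Icc.2 hab)])]; exact h2
  -- FTC
  have hFTC : ∀ u v, u ∈ Set.Icc a b → v ∈ Set.Icc a b →
      ∫ t in u..v, D t * Real.cos (f t - θ)
        = Real.sin (f v - θ) - Real.sin (f u - θ) := by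
    intro u v hu hv
    apply integral_eq_sub_of_hasDerivAt
    · intro t ht
      have ht' : t ∈ Set.Icc a b := Set.uIcc_subset_Icc hu hv ht
      have h1 : HasDerivAt (fun s => f s - θ) (D t) t := (hg t ht').sub_const θ
      exact ((Real.hasDerivAt_sin (f t - θ)).comp t h1).congr_deriv (mul_comm _ _)
    · exact hint2 u v hu hv
  -- Step A: partition bound
  have stepA : ∀ n : ℕ, 0 < n →
      ∫ x in a..b, Real.cos (f x - θ) ≤
        (1 - Real.sin (f a - θ)) / lam + (b - a) * (D b - D a) / lam / n := by
    intro n hn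
    set c : ℝ := (b - a) / n with hc
    have hc0 : 0 ≤ c := div_nonneg (by linarith) (Nat.cast_nonneg n)
    set x : ℕ → ℝ := fun i => a + i * c with hx
    have hx0 : x 0 = a := by simp [hx]
    have hn' : (n:ℝ) ≠ 0 := Nat.cast_ne_zero.2 hn.ne'
    have hxn : x n = b := by
      simp only [hx, hc]; field_simp; ring
    have hxmono : ∀ i j : ℕ, i ≤ j → x i ≤ x j := by
      intro i j hij; simp only [hx]
      have h1 : (i:ℝ) ≤ j := Nat.cast_le.2 hij
      nlinarith
    have hxmem : ∀ i, i ≤ n → x i ∈ Set.Icc a b := by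
      intro i hi
      constructor
      · have h1 : 0 ≤ (i:ℝ) * c := mul_nonneg (Nat.cast_nonneg i) hc0
        simp only [hx]; linarith
      · calc x i ≤ x n := hxmono i n hi
          _ = b := hxn
    have hstep : ∀ i : ℕ, x (i+1) - x i = c := by
      intro i; simp only [hx]; push_cast; ring
    have piece : ∀ i ∈ Finset.range n,
        ∫ t in x i..x (i+1), Real.cos (f t - θ) ≤
          (D (x i))⁻¹ * (Real.sin (f (x (i+1)) - θ) - Real.sin (f (x i) - θ))
            + c * ((D (x (i+1)) - D (x i)) / lam) := by
      intro i hi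
      rw [Finset.mem_range] at hi
      have hmi := hxmem i hi.le
      have hmi1 := hxmem (i+1) (Nat.succ_le_of_lt hi)
      have hle : x i ≤ x (i+1) := hxmono i (i+1) (Nat.le_succ i)
      have hci : lam ≤ D (x i) := hlow _ hmi
      have hci0 : 0 < D (x i) := lt_of_lt_of_le hlam hci
      have key : ∫ t in x i..x (i+1), Real.cos (f t - θ) ≤
          ∫ t in x i..x (i+1),
            (D t * Real.cos (f t - θ) / D (x i) + (D (x (i+1)) - D (x i)) / lam) := by
        apply integral_mono_on hle (hint1 _ _ hmi hmi1)
        · exact ((hint2 _ _ hmi hmi1).div_const _).add intervalIntegrable_const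
        · intro t ht
          have htm : t ∈ Set.Icc a b := ⟨hmi.1.trans ht.1, ht.2.trans hmi1.2⟩
          have hdt1 : D (x i) ≤ D t := hmono hmi htm ht.1
          have hdt2 : D t ≤ D (x (i+1)) := hmono htm hmi1 ht.2
          have h1 : -1 ≤ Real.cos (f t - θ) := Real.neg_one_le_cos _
          have h2 : Real.cos (f t - θ) ≤ 1 := Real.cos_le_one _
          rw [div_add_div _ _ (ne_of_gt hci0) (ne_of_gt hlam),
            le_div_iff₀ (by positivity)]
          nlinarith [mul_nonneg (mul_nonneg hlam.le
              (by linarith : (0:ℝ) ≤ D t - D (x i)))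
              (by linarith : (0:ℝ) ≤ Real.cos (f t - θ) + 1),
            mul_nonneg (by linarith : (0:ℝ) ≤ D (x (i+1)) - D (x i))
              (by linarith : (0:ℝ) ≤ D (x i) - lam),
            mul_nonneg hlam.le (by linarith : (0:ℝ) ≤ D (x (i+1)) - D t)]
      have heq : ∫ t in x i..x (i+1),
            (D t * Real.cos (f t - θ) / D (x i) + (D (x (i+1)) - D (x i)) / lam)
          = (D (x i))⁻¹ * (Real.sin (f (x (i+1)) - θ) - Real.sin (f (x i) - θ))
            + c * ((D (x (i+1)) - D (x i)) / lam) := by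
        rw [integral_add ((hint2 _ _ hmi hmi1).div_const _) intervalIntegrable_const,
          intervalIntegral.integral_div, hFTC _ _ hmi hmi1, intervalIntegral.integral_const, hstep i, smul_eq_mul]
        ring
      rw [heq] at key; exact key
    have hsum : ∫ x in a..b, Real.cos (f x - θ)
        = ∑ i ∈ Finset.range n, ∫ t in x i..x (i+1), Real.cos (f t - θ) := by
      rw [intervalIntegral.sum_integral_adjacent_intervals
        (fun k hk => hint1 _ _ (hxmem k hk.le) (hxmem (k+1) (Nat.succ_le_of_lt hk))),
        hx0, hxn]
    have habel := vdc_abel (fun i => (D (x i))⁻¹)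
      (fun i => Real.sin (f (x i) - θ)) n hn
      (fun i hi => inv_nonneg.2 (le_of_lt (lt_of_lt_of_le hlam (hlow _ (hxmem i hi.le)))))
      (fun i j hij hj => inv_anti₀
        (lt_of_lt_of_le hlam (hlow _ (hxmem i (hij.trans hj.le))))
        (hmono (hxmem i (hij.trans hj.le)) (hxmem j hj.le) (hxmono i j hij)))
      (fun i hi => Real.sin_le_one _)
    have hw0 : ((D (x 0))⁻¹ : ℝ) * (1 - Real.sin (f (x 0) - θ))
        ≤ (1 - Real.sin (f a - θ)) / lam := by
      rw [hx0]
      have h1 : (D a)⁻¹ ≤ lam⁻¹ :=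
        inv_anti₀ hlam (hlow a (Set.left_mem_Icc.2 hab))
      have h2 : 0 ≤ 1 - Real.sin (f a - θ) := by linarith [Real.sin_le_one (f a - θ)]
      calc (D a)⁻¹ * (1 - Real.sin (f a - θ)) ≤ lam⁻¹ * (1 - Real.sin (f a - θ)) :=
            mul_le_mul_of_nonneg_right h1 h2
        _ = (1 - Real.sin (f a - θ)) / lam := by rw [inv_mul_eq_div]
    have hwn : 0 ≤ ((D (x (n-1)))⁻¹ : ℝ) * (1 - Real.sin (f (x n) - θ)) := by
      apply mul_nonneg (inv_nonneg.2 (le_of_lt (lt_of_lt_of_le hlam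
        (hlow _ (hxmem (n-1) (by omega))))))
      linarith [Real.sin_le_one (f (x n) - θ)]
    have herr : ∑ i ∈ Finset.range n, c * ((D (x (i+1)) - D (x i)) / lam)
        = (b - a) * (D b - D a) / lam / n := by
      rw [← Finset.mul_sum, ← Finset.sum_div, Finset.sum_range_sub (fun i => D (x i)),
        hx0, hxn, hc]
      ring
    calc ∫ x in a..b, Real.cos (f x - θ)
        = ∑ i ∈ Finset.range n, ∫ t in x i..x (i+1), Real.cos (f t - θ) := hsum
      _ ≤ ∑ i ∈ Finset.range n,
          ((D (x i))⁻¹ * (Real.sin (f (x (i+1)) - θ) - Real.sin (f (x i) - θ))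
            + c * ((D (x (i+1)) - D (x i)) / lam)) := Finset.sum_le_sum piece
      _ = (∑ i ∈ Finset.range n,
            (D (x i))⁻¹ * (Real.sin (f (x (i+1)) - θ) - Real.sin (f (x i) - θ)))
          + ∑ i ∈ Finset.range n, c * ((D (x (i+1)) - D (x i)) / lam) :=
            Finset.sum_add_distrib
      _ ≤ (1 - Real.sin (f a - θ)) / lam + (b - a) * (D b - D a) / lam / n := by
          rw [herr]
          have := habel
          have hfinal : ∑ i ∈ Finset.range n,
              (D (x i))⁻¹ * (Real.sin (f (x (i+1)) - θ) - Real.sin (f (x i) - θ))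
              ≤ (1 - Real.sin (f a - θ)) / lam := by
            calc _ ≤ (D (x 0))⁻¹ * (1 - Real.sin (f (x 0) - θ))
                  - (D (x (n-1)))⁻¹ * (1 - Real.sin (f (x n) - θ)) := this
              _ ≤ (D (x 0))⁻¹ * (1 - Real.sin (f (x 0) - θ)) := by linarith
              _ ≤ _ := hw0
          linarith
  -- Step B: take n → ∞
  have hDab : D a ≤ D b := hmono (Set.left_mem_Icc.2 hab) (Set.right_mem_Icc.2 hab) hab
  have hC : 0 ≤ (b - a) * (D b - D a) / lam :=
    div_nonneg (mul_nonneg (by linarith) (by linarith)) hlam.le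
  apply le_of_forall_pos_le_add
  intro ε hε
  obtain ⟨n, hnn⟩ := exists_nat_gt ((b - a) * (D b - D a) / lam / ε)
  have hn0 : 0 < n := by
    have h1 : (0:ℝ) ≤ (b - a) * (D b - D a) / lam / ε := div_nonneg hC hε.le
    exact_mod_cast Nat.cast_pos.1 (lt_of_le_of_lt h1 hnn)
  have h2 : (b - a) * (D b - D a) / lam / n ≤ ε := by
    rw [div_le_iff₀ (by exact_mod_cast hn0)]
    have := (div_lt_iff₀ hε).1 hnn
    linarith
  linarith [stepA n hn0]

theorem van_der_corput_first (a b lam : ℝ) (hab : a ≤ b) (f : ℝ → ℝ)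
    (hdf : DifferentiableOn ℝ f (Set.Ioo a b))
    (hmono : MonotoneOn (deriv f) (Set.Icc a b))
    (hlam : 0 < lam) (hlow : ∀ x ∈ Set.Icc a b, lam ≤ deriv f x) :
    ‖∫ x in a..b, Complex.exp (f x * Complex.I)‖ ≤
      (1 + Real.sin ((∫ x in a..b, Complex.exp (f x * Complex.I)).arg - f a)) / lam ∧
    ‖∫ x in a..b, Complex.exp (f x * Complex.I)‖ ≤ 2 / lam := by
  have hg : ∀ x ∈ Set.Icc a b, HasDerivAt f (deriv f x) x := by
    intro x hx
    by_cases h : DifferentiableAt ℝ f x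
    · exact h.hasDerivAt
    · have h1 := hlow x hx
      rw [deriv_zero_of_not_differentiableAt h] at h1
      linarith
  have hcont : ContinuousOn f (Set.Icc a b) :=
    fun x hx => (hg x hx).continuousAt.continuousWithinAt
  set I := ∫ x in a..b, Complex.exp (f x * Complex.I) with hI
  set θ := I.arg with hθ
  -- integrabilities
  have hint1 : IntervalIntegrable (fun t => (Real.cos (f t - θ) : ℂ)) MeasureTheory.volume a b := by
    apply ContinuousOn.intervalIntegrable
    rw [Set.uIcc_of_le hab]
    exact Complex.continuous_ofReal.comp_continuousOn
      (Real.continuous_cos.comp_continuousOn (hcont.sub continuousOn_const))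
  have hint2 : IntervalIntegrable (fun t => (Real.sin (f t - θ) : ℂ) * Complex.I)
      MeasureTheory.volume a b := by
    apply ContinuousOn.intervalIntegrable
    rw [Set.uIcc_of_le hab]
    exact (Complex.continuous_ofReal.comp_continuousOn
      (Real.continuous_sin.comp_continuousOn (hcont.sub continuousOn_const))).mul
      continuousOn_const
  -- |I| as a real integral of cos
  have habs : ‖I‖ = ∫ x in a..b, Real.cos (f x - θ) := by
    have h1 : (‖I‖ : ℂ) = I * Complex.exp (-(θ : ℂ) * Complex.I) := by
      conv_rhs => rw [← Complex.norm_mul_exp_arg_mul_I I]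
      rw [mul_assoc, ← Complex.exp_add, ← hθ]
      ring_nf
      rw [Complex.exp_zero, mul_one]
    have h2 : I * Complex.exp (-(θ : ℂ) * Complex.I)
        = ∫ x in a..b, Complex.exp (f x * Complex.I) * Complex.exp (-(θ:ℂ) * Complex.I) := by
      rw [intervalIntegral.integral_mul_const]
    have h3 : ∀ x : ℝ, Complex.exp ((f x : ℂ) * Complex.I) * Complex.exp (-(θ:ℂ) * Complex.I)
        = (Real.cos (f x - θ) : ℂ) + (Real.sin (f x - θ) : ℂ) * Complex.I := by
      intro x
      rw [← Complex.exp_add, Complex.ofReal_cos, Complex.ofReal_sin, ← Complex.exp_mul_I]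
      push_cast
      ring_nf
    have h4 : (‖I‖ : ℂ)
        = (∫ x in a..b, Real.cos (f x - θ)) + (∫ x in a..b, Real.sin (f x - θ)) * Complex.I := by
      rw [h1, h2]
      simp_rw [h3]
      rw [intervalIntegral.integral_add hint1 hint2, intervalIntegral.integral_mul_const,
        intervalIntegral.integral_ofReal, intervalIntegral.integral_ofReal]
    have := congrArg Complex.re h4
    simpa using this
  have hkey := vdc_key a b lam θ hab f hg hmono hlam hlow
  have hmain : ‖I‖ ≤ (1 + Real.sin (θ - f a)) / lam := by
    rw [habs]
    have hsin : Real.sin (f a - θ) = - Real.sin (θ - f a) := by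
      rw [← neg_sub θ (f a), Real.sin_neg]
    rw [hsin] at hkey
    convert hkey using 2
    ring
  refine ⟨hmain, hmain.trans ?_⟩
  exact (div_le_div_iff_of_pos_right hlam).2 (by linarith [Real.sin_le_one (θ - f a)])
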